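/- Let X ∈ ℝ^{n×p} with p ≥ 2 have columns of unit ℓ₂-norm, let β* ∈ ℝ^p with s* = ‖β*‖₀, let y = Xβ* + ε where ε has i.i.d. N(0, σ²) entries with σ > 0, let a ≥ 0, set δ = σ√(2(1+a)·log p), and let c ≥ 0 with γ(⌈(2+c)s*⌉) > 0. Suppose β̂ ∈ ℝ^p is feasible for the Discrete Dantzig Selector problem with parameter δ (i.e., ‖Xᵀ(y − Xβ̂)‖∞ ≤ δ) and satisfies ‖β̂‖₀ ≤ (1+c)·ŝ_LB, where ŝ_LB is a lower bound on the optimal value of that problem (ŝ_LB ≤ ‖β‖₀ for every feasible β). Then, with probability at least 1 − ( pᵃ √(π log p) )⁻¹: ‖β̂‖₀ ≤ (1+c)s*; ‖β̂ − β*‖₁ ≤ 2(2+c) [γ(⌈(2+c)s*⌉)]⁻² s* δ; ‖β̂ − β*‖₂² ≤ 4(2+c) [γ(⌈(2+c)s*⌉)]⁻⁴ s* δ²; and n⁻¹ ‖X(β̂ − β*)‖₂² ≤ 4(2+c) [γ(⌈(2+c)s*⌉)]⁻² s* δ². -/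

import Mathlib

noncomputable section
open Classical MeasureTheory ProbabilityTheory

/-- The ℓ₀ "norm": number of nonzero entries. -/
def l0 {p : ℕ} (β : Fin p → ℝ) : ℕ := (Finset.univ.filter fun i => β i ≠ 0).card

/-- ℓ₁-norm. -/
def l1 {p : ℕ} (β : Fin p → ℝ) : ℝ := ∑ i, |β i|

/-- Squared Euclidean norm. -/
def l2sq {q : ℕ} (v : Fin q → ℝ) : ℝ := ∑ i, (v i) ^ 2

/-- Euclidean norm. -/
def l2 {q : ℕ} (v : Fin q → ℝ) : ℝ := Real.sqrt (l2sq v)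

/-- `γ(k) = min{ ‖Xθ‖₂/‖θ‖₂ : θ ≠ 0, ‖θ‖₀ ≤ k }`. -/
def gammaX {n p : ℕ} (X : Matrix (Fin n) (Fin p) ℝ) (k : ℕ) : ℝ :=
  sInf {r : ℝ | ∃ θ : Fin p → ℝ, θ ≠ 0 ∧ l0 θ ≤ k ∧ r = l2 (X.mulVec θ) / l2 θ}

/-- Feasibility for the Dantzig-type constraint: `‖Xᵀ(y − Xβ)‖∞ ≤ δ`. -/
def Feas {n p : ℕ} (X : Matrix (Fin n) (Fin p) ℝ) (y : Fin n → ℝ) (δ : ℝ)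
    (β : Fin p → ℝ) : Prop :=
  ∀ j, |X.transpose.mulVec (y - X.mulVec β) j| ≤ δ

section Aux
open Real Set Filter
open scoped NNReal ENNReal

lemma sqrt_const_prod (a b : ℝ) (ha : 0 < a) (hb : 0 < b) :
    Real.sqrt (2*π*a) * Real.sqrt (2*π*b)
      = Real.sqrt (2*π*(a+b)) * Real.sqrt (2*π*(a*b/(a+b))) := by
  rw [← Real.sqrt_mul (by positivity), ← Real.sqrt_mul (by positivity)]
  congr 1
  field_simp

lemma pdf_conv_pointwise {v1 v2 : ℝ≥0} (h1 : v1 ≠ 0) (h2 : v2 ≠ 0) (y x : ℝ) :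
    gaussianPDFReal 0 v1 x * gaussianPDFReal 0 v2 (y - x)
      = gaussianPDFReal 0 (v1 + v2) y *
        gaussianPDFReal 0 (NNReal.mk ((v1:ℝ)*(v2:ℝ)/((v1:ℝ)+(v2:ℝ))) (by positivity))
          (x - y*(v1:ℝ)/((v1:ℝ)+(v2:ℝ))) := by
  have ha : (0:ℝ) < v1 := lt_of_le_of_ne v1.coe_nonneg (by exact_mod_cast (Ne.symm h1))
  have hb : (0:ℝ) < v2 := lt_of_le_of_ne v2.coe_nonneg (by exact_mod_cast (Ne.symm h2))
  simp only [gaussianPDFReal, NNReal.coe_add, NNReal.coe_mk, sub_zero]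
  rw [mul_mul_mul_comm, ← Real.exp_add, mul_mul_mul_comm, ← Real.exp_add,
    ← mul_inv, ← mul_inv, sqrt_const_prod _ _ ha hb]
  congr 1
  congr 1
  field_simp
  ring

lemma pdf_conv_integral {v1 v2 : ℝ≥0} (h1 : v1 ≠ 0) (h2 : v2 ≠ 0) (y : ℝ) :
    ∫ x, gaussianPDFReal 0 v1 x * gaussianPDFReal 0 v2 (y - x)
      = gaussianPDFReal 0 (v1 + v2) y := by
  have ha : (0:ℝ) < v1 := lt_of_le_of_ne v1.coe_nonneg (by exact_mod_cast (Ne.symm h1))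
  have hb : (0:ℝ) < v2 := lt_of_le_of_ne v2.coe_nonneg (by exact_mod_cast (Ne.symm h2))
  have hvp : (NNReal.mk ((v1:ℝ)*(v2:ℝ)/((v1:ℝ)+(v2:ℝ))) (by positivity) : ℝ≥0) ≠ 0 := by
    intro h
    have := congrArg (NNReal.toReal) h
    simp only [NNReal.coe_mk, NNReal.coe_zero] at this
    have : (0:ℝ) < (v1:ℝ)*(v2:ℝ)/((v1:ℝ)+(v2:ℝ)) := by positivity
    linarith
  simp_rw [pdf_conv_pointwise h1 h2 y]
  rw [MeasureTheory.integral_const_mul, integral_sub_right_eq_self (gaussianPDFReal 0 _) (y*(v1:ℝ)/((v1:ℝ)+(v2:ℝ))),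
    integral_gaussianPDFReal_eq_one _ hvp, mul_one]

lemma pdf_mul_integrable {v1 v2 : ℝ≥0} (z : ℝ) :
    Integrable (fun x => gaussianPDFReal 0 v1 x * gaussianPDFReal 0 v2 (z - x)) := by
  refine Integrable.mono' ((integrable_gaussianPDFReal 0 v1).const_mul ((Real.sqrt (2*π*v2))⁻¹))
    ?_ ?_
  · exact ((measurable_gaussianPDFReal 0 v1).mul
      ((measurable_gaussianPDFReal 0 v2).comp (measurable_const.sub measurable_id))).aestronglyMeasurable
  · refine Filter.Eventually.of_forall fun x => ?_
    rw [Real.norm_eq_abs, abs_of_nonneg (mul_nonneg (gaussianPDFReal_nonneg _ _ _) (gaussianPDFReal_nonneg _ _ _)), mul_comm ((Real.sqrt (2*π*v2))⁻¹)]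
    refine mul_le_mul_of_nonneg_left ?_ (gaussianPDFReal_nonneg _ _ _)
    rw [gaussianPDFReal]
    calc (Real.sqrt (2*π*v2))⁻¹ * Real.exp (-(z - x - 0)^2/(2*v2))
        ≤ (Real.sqrt (2*π*v2))⁻¹ * 1 := by
          refine mul_le_mul_of_nonneg_left ?_ (by positivity)
          rw [Real.exp_le_one_iff, neg_div]
          have : (0:ℝ) ≤ (z - x - 0)^2/(2*v2) := by positivity
          exact neg_nonpos.mpr this
      _ = (Real.sqrt (2*π*v2))⁻¹ := mul_one _

lemma gauss_conv_measure {v1 v2 : ℝ≥0} (h1 : v1 ≠ 0) (h2 : v2 ≠ 0) :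
    ((gaussianReal 0 v1).prod (gaussianReal 0 v2)).map (fun p : ℝ × ℝ => p.1 + p.2)
      = gaussianReal 0 (v1 + v2) := by
  have hadd : Measurable (fun p : ℝ × ℝ => p.1 + p.2) := measurable_fst.add measurable_snd
  refine Measure.ext fun s hs => ?_
  rw [Measure.map_apply hadd hs]
  have hA : MeasurableSet ((fun p : ℝ × ℝ => p.1 + p.2) ⁻¹' s) := hadd hs
  rw [Measure.prod_apply hA]
  have hstep : ∀ x : ℝ, gaussianReal 0 v2 (Prod.mk x ⁻¹' ((fun p : ℝ × ℝ => p.1 + p.2) ⁻¹' s))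
      = ∫⁻ z in s, gaussianPDF 0 v2 (z - x) := by
    intro x
    have hpre : (Prod.mk x ⁻¹' ((fun p : ℝ × ℝ => p.1 + p.2) ⁻¹' s)) = (fun y => x + y) ⁻¹' s := rfl
    rw [hpre, gaussianReal_apply _ h2]
    have hmp : MeasurePreserving (fun y : ℝ => x + y) volume volume :=
      measurePreserving_add_left volume x
    have hemb : MeasurableEmbedding (fun y : ℝ => x + y) :=
      (MeasurableEquiv.addLeft x).measurableEmbedding
    have := hmp.setLIntegral_comp_preimage_emb hemb (fun z => gaussianPDF 0 v2 (z - x)) s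
    simp only [add_sub_cancel_left] at this
    exact this
  calc ∫⁻ x, gaussianReal 0 v2 (Prod.mk x ⁻¹' ((fun p : ℝ × ℝ => p.1 + p.2) ⁻¹' s)) ∂(gaussianReal 0 v1)
      = ∫⁻ x, (∫⁻ z in s, gaussianPDF 0 v2 (z - x)) ∂(gaussianReal 0 v1) := by
        exact lintegral_congr hstep
    _ = ∫⁻ x, gaussianPDF 0 v1 x * (∫⁻ z in s, gaussianPDF 0 v2 (z - x)) := by
        have hG : Measurable fun x => ∫⁻ z in s, gaussianPDF 0 v2 (z - x) :=
          Measurable.lintegral_prod_right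
            ((measurable_gaussianPDF 0 v2).comp (measurable_snd.sub measurable_fst))
        rw [gaussianReal_of_var_ne_zero _ h1,
          lintegral_withDensity_eq_lintegral_mul _ (measurable_gaussianPDF 0 v1) hG]
        exact lintegral_congr fun x => rfl
    _ = ∫⁻ x, (∫⁻ z in s, gaussianPDF 0 v1 x * gaussianPDF 0 v2 (z - x)) := by
        refine lintegral_congr fun x => ?_
        exact (lintegral_const_mul _
          ((measurable_gaussianPDF 0 v2).comp (measurable_id.sub measurable_const))).symm
    _ = ∫⁻ z in s, (∫⁻ x, gaussianPDF 0 v1 x * gaussianPDF 0 v2 (z - x)) := by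
        refine lintegral_lintegral_swap ?_
        refine Measurable.aemeasurable ?_
        exact ((measurable_gaussianPDF 0 v1).comp measurable_fst).mul
          ((measurable_gaussianPDF 0 v2).comp (measurable_snd.sub measurable_fst))
    _ = ∫⁻ z in s, gaussianPDF 0 (v1 + v2) z := by
        refine setLIntegral_congr_fun hs (fun z _ => ?_)
        simp only [gaussianPDF]
        rw [← pdf_conv_integral h1 h2 z,
          ofReal_integral_eq_lintegral_ofReal (pdf_mul_integrable z)
          (Filter.Eventually.of_forall fun x => mul_nonneg (gaussianPDFReal_nonneg _ _ _) (gaussianPDFReal_nonneg _ _ _))]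
        exact lintegral_congr fun x => (ENNReal.ofReal_mul (gaussianPDFReal_nonneg _ _ _)).symm
    _ = gaussianReal 0 (v1 + v2) s := (gaussianReal_apply _ (by simp [h1]) s).symm

variable {Ω : Type*} [MeasurableSpace Ω] {P : Measure Ω} [IsProbabilityMeasure P]

lemma ae_zero_of_map_dirac {Xr : Ω → ℝ} (hX : Measurable Xr)
    (h : P.map Xr = gaussianReal 0 0) : Xr =ᵐ[P] 0 := by
  rw [gaussianReal_zero_var] at h
  have : P (Xr ⁻¹' ({0}ᶜ)) = 0 := by
    rw [← Measure.map_apply hX (MeasurableSet.singleton (0:ℝ)).compl, h,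
      Measure.dirac_apply' _ (MeasurableSet.singleton (0:ℝ)).compl]
    simp
  refine (ae_iff).mpr (measure_mono_null (fun ω hω => ?_) this)
  simpa using hω

lemma gauss_add {Xr Yr : Ω → ℝ} (hX : Measurable Xr) (hY : Measurable Yr)
    (hind : IndepFun Xr Yr P) {v1 v2 : ℝ≥0}
    (hgX : P.map Xr = gaussianReal 0 v1) (hgY : P.map Yr = gaussianReal 0 v2) :
    P.map (fun ω => Xr ω + Yr ω) = gaussianReal 0 (v1 + v2) := by
  by_cases h1 : v1 = 0
  · subst h1
    have hz := ae_zero_of_map_dirac hX hgX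
    have : (fun ω => Xr ω + Yr ω) =ᵐ[P] Yr := by
      filter_upwards [hz] with ω hω
      simp only [Pi.zero_apply] at hω
      simp [hω]
    rw [Measure.map_congr this, hgY, zero_add]
  by_cases h2 : v2 = 0
  · subst h2
    have hz := ae_zero_of_map_dirac hY hgY
    have : (fun ω => Xr ω + Yr ω) =ᵐ[P] Xr := by
      filter_upwards [hz] with ω hω
      simp only [Pi.zero_apply] at hω
      simp [hω]
    rw [Measure.map_congr this, hgX, add_zero]
  have hprod : P.map (fun ω => (Xr ω, Yr ω)) = (P.map Xr).prod (P.map Yr) :=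
    (indepFun_iff_map_prod_eq_prod_map_map hX.aemeasurable hY.aemeasurable).mp hind
  have : (fun ω => Xr ω + Yr ω) = (fun p : ℝ × ℝ => p.1 + p.2) ∘ (fun ω => (Xr ω, Yr ω)) := rfl
  rw [this, ← Measure.map_map (g := fun p : ℝ × ℝ => p.1 + p.2) (measurable_fst.add measurable_snd) (hX.prodMk hY), hprod,
    hgX, hgY, gauss_conv_measure h1 h2]

lemma gauss_sum {m : ℕ} (ξ : Fin m → Ω → ℝ) (hmeas : ∀ i, Measurable (ξ i))
    (hind : iIndepFun ξ P) (v : Fin m → ℝ≥0)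
    (hg : ∀ i, P.map (ξ i) = gaussianReal 0 (v i)) (s : Finset (Fin m)) :
    P.map (fun ω => ∑ i ∈ s, ξ i ω) = gaussianReal 0 (∑ i ∈ s, v i) := by
  classical
  induction s using Finset.induction_on with
  | empty =>
      simp only [Finset.sum_empty]
      rw [show (fun _ : Ω => (0:ℝ)) = (fun _ => 0) from rfl, Measure.map_const,
        gaussianReal_zero_var]
      simp
  | @insert a s ha ih =>
      have hsum : Measurable (fun ω => ∑ i ∈ s, ξ i ω) := by
        exact Finset.measurable_sum s fun i _ => hmeas i
      have hIF : IndepFun (ξ a) (fun ω => ∑ i ∈ s, ξ i ω) P := by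
        have := (hind.indepFun_finsetSum_of_notMem hmeas ha).symm
        convert this using 1
        ext ω
        simp
      simp only [Finset.sum_insert ha]
      rw [gauss_add (hmeas a) hsum hIF (hg a) ih]

lemma exp_tendsto_zero (V : ℝ) (hV : 0 < V) :
    Filter.Tendsto (fun x : ℝ => -V * Real.exp (-x^2/(2*V))) atTop (nhds 0) := by
  have h1 : Filter.Tendsto (fun x : ℝ => -x^2/(2*V)) atTop atBot := by
    have h2 : Filter.Tendsto (fun x : ℝ => x^2) atTop atTop :=
      Filter.tendsto_pow_atTop (by norm_num)
    have h3 : Filter.Tendsto (fun x : ℝ => x^2/(2*V)) atTop atTop :=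
      h2.atTop_div_const (by positivity)
    simpa [neg_div] using Filter.tendsto_neg_atBot_iff.mpr h3
  have h4 := Real.tendsto_exp_atBot.comp h1
  have := h4.const_mul (-V)
  simpa using this

lemma deriv_gauss (V : ℝ) (hV : 0 < V) (x : ℝ) :
    HasDerivAt (fun x : ℝ => -V * Real.exp (-x^2/(2*V))) (x * Real.exp (-x^2/(2*V))) x := by
  have h1 : HasDerivAt (fun x : ℝ => -x^2/(2*V)) (-(2*x^1)/(2*V)) x := by
    have := (hasDerivAt_pow 2 x).neg.div_const (2*V)
    simpa using this
  have h2 := (h1.exp).const_mul (-V)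
  refine h2.congr_deriv ?_
  field_simp

lemma gauss_tail_exp (V t : ℝ) (hV : 0 < V) (ht : 0 < t) :
    ∫ x in Ioi t, Real.exp (-x^2/(2*V)) ≤ (V/t) * Real.exp (-t^2/(2*V)) := by
  have hderiv : ∀ x ∈ Ici t, HasDerivAt (fun x : ℝ => -V * Real.exp (-x^2/(2*V)))
      (x * Real.exp (-x^2/(2*V))) x := fun x _ => deriv_gauss V hV x
  have hpos : ∀ x ∈ Ioi t, 0 ≤ x * Real.exp (-x^2/(2*V)) := fun x hx =>
    mul_nonneg (le_of_lt (lt_trans ht hx)) (Real.exp_nonneg _)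
  have hInt : IntegrableOn (fun x => x * Real.exp (-x^2/(2*V))) (Ioi t) :=
    integrableOn_Ioi_deriv_of_nonneg' hderiv hpos (exp_tendsto_zero V hV)
  have hval : ∫ x in Ioi t, x * Real.exp (-x^2/(2*V)) = V * Real.exp (-t^2/(2*V)) := by
    rw [integral_Ioi_of_hasDerivAt_of_nonneg' hderiv hpos (exp_tendsto_zero V hV)]
    ring
  calc ∫ x in Ioi t, Real.exp (-x^2/(2*V))
      ≤ ∫ x in Ioi t, (1/t) * (x * Real.exp (-x^2/(2*V))) := by
        refine integral_mono_of_nonneg (Filter.Eventually.of_forall fun x => Real.exp_nonneg _)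
          (hInt.const_mul (1/t)) ?_
        rw [EventuallyLE, ae_restrict_iff' measurableSet_Ioi]
        refine Filter.Eventually.of_forall fun x hx => ?_
        have hx1 : (1:ℝ) ≤ x / t := (one_le_div ht).mpr (le_of_lt hx)
        calc Real.exp (-x^2/(2*V)) = 1 * Real.exp (-x^2/(2*V)) := (one_mul _).symm
          _ ≤ (x/t) * Real.exp (-x^2/(2*V)) :=
              mul_le_mul_of_nonneg_right hx1 (Real.exp_nonneg _)
          _ = (1/t) * (x * Real.exp (-x^2/(2*V))) := by ring
    _ = (1/t) * ∫ x in Ioi t, x * Real.exp (-x^2/(2*V)) := MeasureTheory.integral_const_mul _ _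
    _ = (V/t) * Real.exp (-t^2/(2*V)) := by rw [hval]; ring

lemma gauss_measure_Ioi_le (V : ℝ≥0) (hV : V ≠ 0) (t : ℝ) (ht : 0 < t) :
    ∫ x in Ioi t, gaussianPDFReal 0 V x
      ≤ ((V:ℝ)/t) * (Real.sqrt (2*π*(V:ℝ)))⁻¹ * Real.exp (-t^2/(2*(V:ℝ))) := by
  have hVpos : (0:ℝ) < V := lt_of_le_of_ne V.coe_nonneg (by exact_mod_cast (Ne.symm hV))
  simp only [gaussianPDFReal, sub_zero]
  rw [MeasureTheory.integral_const_mul]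
  have := gauss_tail_exp (V:ℝ) t hVpos ht
  calc (Real.sqrt (2*π*(V:ℝ)))⁻¹ * ∫ x in Ioi t, Real.exp (-x^2/(2*(V:ℝ)))
      ≤ (Real.sqrt (2*π*(V:ℝ)))⁻¹ * (((V:ℝ)/t) * Real.exp (-t^2/(2*(V:ℝ)))) :=
        mul_le_mul_of_nonneg_left this (by positivity)
    _ = ((V:ℝ)/t) * (Real.sqrt (2*π*(V:ℝ)))⁻¹ * Real.exp (-t^2/(2*(V:ℝ))) := by ring

lemma gauss_measure_tail (V : ℝ≥0) (hV : V ≠ 0) (t : ℝ) (ht : 0 < t) :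
    gaussianReal 0 V {x : ℝ | t < |x|}
      ≤ ENNReal.ofReal (2 * ((V:ℝ)/t) * (Real.sqrt (2*π*(V:ℝ)))⁻¹ * Real.exp (-t^2/(2*(V:ℝ)))) := by
  have hVpos : (0:ℝ) < V := lt_of_le_of_ne V.coe_nonneg (by exact_mod_cast (Ne.symm hV))
  have hset : {x : ℝ | t < |x|} = Iio (-t) ∪ Ioi t := by
    ext x
    simp only [Set.mem_setOf_eq, Set.mem_union, Set.mem_Iio, Set.mem_Ioi, lt_abs]
    constructor
    · rintro (h | h)
      · right; exact h
      · left; linarith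
    · rintro (h | h)
      · right; linarith
      · left; exact h
  have hIio : ∫ x in Iio (-t), gaussianPDFReal 0 V x = ∫ x in Ioi t, gaussianPDFReal 0 V x := by
    rw [← integral_Iic_eq_integral_Iio]
    rw [show ∫ x in Iic (-t), gaussianPDFReal 0 V x
        = ∫ x in Ioi t, gaussianPDFReal 0 V (-x) from (integral_comp_neg_Ioi t (gaussianPDFReal 0 V)).symm]
    refine setIntegral_congr_fun measurableSet_Ioi fun x _ => ?_
    simp [gaussianPDFReal, neg_sq]
  have hb : ∫ x in Ioi t, gaussianPDFReal 0 V x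
      ≤ ((V:ℝ)/t) * (Real.sqrt (2*π*(V:ℝ)))⁻¹ * Real.exp (-t^2/(2*(V:ℝ))) :=
    gauss_measure_Ioi_le V hV t ht
  rw [hset]
  calc gaussianReal 0 V (Iio (-t) ∪ Ioi t)
      ≤ gaussianReal 0 V (Iio (-t)) + gaussianReal 0 V (Ioi t) := measure_union_le _ _
    _ ≤ ENNReal.ofReal (((V:ℝ)/t) * (Real.sqrt (2*π*(V:ℝ)))⁻¹ * Real.exp (-t^2/(2*(V:ℝ))))
        + ENNReal.ofReal (((V:ℝ)/t) * (Real.sqrt (2*π*(V:ℝ)))⁻¹ * Real.exp (-t^2/(2*(V:ℝ)))) := by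
        refine add_le_add ?_ ?_
        · rw [gaussianReal_apply_eq_integral _ hV]
          exact ENNReal.ofReal_le_ofReal (le_trans (le_of_eq hIio) hb)
        · rw [gaussianReal_apply_eq_integral _ hV]
          exact ENNReal.ofReal_le_ofReal hb
    _ = ENNReal.ofReal (2 * ((V:ℝ)/t) * (Real.sqrt (2*π*(V:ℝ)))⁻¹ * Real.exp (-t^2/(2*(V:ℝ)))) := by
        rw [← ENNReal.ofReal_add (by positivity) (by positivity)]
        ring_nf


lemma l2sq_nonneg {q : ℕ} (v : Fin q → ℝ) : 0 ≤ l2sq v :=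
  Finset.sum_nonneg fun i _ => sq_nonneg _

lemma l1_nonneg {p : ℕ} (v : Fin p → ℝ) : 0 ≤ l1 v :=
  Finset.sum_nonneg fun i _ => abs_nonneg _

lemma l2_sq_eq {q : ℕ} (v : Fin q → ℝ) : (l2 v) ^ 2 = l2sq v :=
  Real.sq_sqrt (l2sq_nonneg v)

lemma l2_nonneg {q : ℕ} (v : Fin q → ℝ) : 0 ≤ l2 v := Real.sqrt_nonneg _

lemma l2sq_pos {q : ℕ} {v : Fin q → ℝ} (hv : v ≠ 0) : 0 < l2sq v := by
  rcases lt_or_eq_of_le (l2sq_nonneg v) with h | h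
  · exact h
  exfalso
  apply hv
  funext i
  have := (Finset.sum_eq_zero_iff_of_nonneg (fun i _ => sq_nonneg (v i))).mp h.symm
  have := this i (Finset.mem_univ i)
  exact pow_eq_zero_iff (by norm_num) |>.mp this

lemma l2_pos {q : ℕ} {v : Fin q → ℝ} (hv : v ≠ 0) : 0 < l2 v :=
  Real.sqrt_pos.mpr (l2sq_pos hv)

lemma l0_sub_le {p : ℕ} (u w : Fin p → ℝ) : l0 (u - w) ≤ l0 u + l0 w := by
  classical
  have hsub : (Finset.univ.filter fun i => (u - w) i ≠ 0)
      ⊆ (Finset.univ.filter fun i => u i ≠ 0) ∪ (Finset.univ.filter fun i => w i ≠ 0) := by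
    intro i hi
    simp only [Finset.mem_filter, Finset.mem_univ, true_and, Pi.sub_apply] at hi
    simp only [Finset.mem_union, Finset.mem_filter, Finset.mem_univ, true_and]
    by_contra h
    push_neg at h
    rw [h.1, h.2] at hi
    simp at hi
  calc l0 (u - w) ≤ ((Finset.univ.filter fun i => u i ≠ 0) ∪ (Finset.univ.filter fun i => w i ≠ 0)).card :=
        Finset.card_le_card hsub
    _ ≤ l0 u + l0 w := Finset.card_union_le _ _

lemma l1_sq_le {p : ℕ} (h : Fin p → ℝ) : (l1 h)^2 ≤ (l0 h : ℝ) * l2sq h := by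
  classical
  have h1 : l1 h = ∑ i ∈ Finset.univ.filter (fun i => h i ≠ 0), |h i| := by
    rw [l1, Finset.sum_filter_of_ne]
    intro i _ hne
    intro h0
    exact hne (by rw [h0, abs_zero])
  set S := Finset.univ.filter (fun i => h i ≠ 0) with hS
  have hCS := Finset.sum_mul_sq_le_sq_mul_sq S (fun _ => (1:ℝ)) (fun i => |h i|)
  simp only [one_mul, one_pow, sq_abs] at hCS
  have hsum1 : (∑ _i ∈ S, (1:ℝ)) = (l0 h : ℝ) := by
    rw [Finset.sum_const, l0]
    simp [hS]
  have hsub : ∑ i ∈ S, (h i)^2 ≤ l2sq h := by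
    refine Finset.sum_le_sum_of_subset_of_nonneg (Finset.filter_subset _ _)
      fun i _ _ => sq_nonneg _
  calc (l1 h)^2 = (∑ i ∈ S, |h i|)^2 := by rw [h1]
    _ ≤ (∑ _i ∈ S, (1:ℝ)) * ∑ i ∈ S, (h i)^2 := hCS
    _ = (l0 h : ℝ) * ∑ i ∈ S, (h i)^2 := by rw [hsum1]
    _ ≤ (l0 h : ℝ) * l2sq h := by
        exact mul_le_mul_of_nonneg_left hsub (Nat.cast_nonneg _)


lemma gammaX_le {n p : ℕ} (X : Matrix (Fin n) (Fin p) ℝ) (k : ℕ)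
    {h : Fin p → ℝ} (hne : h ≠ 0) (hl0 : l0 h ≤ k) :
    gammaX X k ≤ l2 (X.mulVec h) / l2 h := by
  refine csInf_le ?_ ⟨h, hne, hl0, rfl⟩
  refine ⟨0, fun r hr => ?_⟩
  obtain ⟨θ, _, _, rfl⟩ := hr
  exact div_nonneg (l2_nonneg _) (l2_nonneg _)

lemma gamma_sq_bound {n p : ℕ} (X : Matrix (Fin n) (Fin p) ℝ) (k : ℕ)
    (hγ : 0 < gammaX X k) {h : Fin p → ℝ} (hl0 : l0 h ≤ k) :
    (gammaX X k)^2 * l2sq h ≤ l2sq (X.mulVec h) := by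
  by_cases hne : h = 0
  · subst hne
    have : X.mulVec 0 = 0 := Matrix.mulVec_zero X
    simp [this, l2sq]
  have hle := gammaX_le X k hne hl0
  have hpos : 0 < l2 h := l2_pos hne
  have h1 : gammaX X k * l2 h ≤ l2 (X.mulVec h) := by
    rw [← le_div_iff₀ hpos]
    exact hle
  have h2 : (gammaX X k * l2 h)^2 ≤ (l2 (X.mulVec h))^2 := by
    refine pow_le_pow_left₀ ?_ h1 2
    positivity
  calc (gammaX X k)^2 * l2sq h = (gammaX X k * l2 h)^2 := by
        rw [mul_pow, l2_sq_eq]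
    _ ≤ (l2 (X.mulVec h))^2 := h2
    _ = l2sq (X.mulVec h) := l2_sq_eq _

lemma l2sq_mulVec_le {n p : ℕ} (X : Matrix (Fin n) (Fin p) ℝ) (h : Fin p → ℝ) (b : ℝ)
    (hb : ∀ j, |X.transpose.mulVec (X.mulVec h) j| ≤ b) :
    l2sq (X.mulVec h) ≤ l1 h * b := by
  have key : l2sq (X.mulVec h) = ∑ j, h j * X.transpose.mulVec (X.mulVec h) j := by
    simp only [l2sq, Matrix.mulVec, dotProduct, Matrix.transpose_apply, pow_two,
      Finset.mul_sum, Finset.sum_mul]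
    rw [Finset.sum_comm]
    refine Finset.sum_congr rfl fun j _ => Finset.sum_congr rfl fun i _ =>
      Finset.sum_congr rfl fun x _ => by ring
  rw [key]
  calc ∑ j, h j * X.transpose.mulVec (X.mulVec h) j
      ≤ ∑ j, |h j| * b := by
        refine Finset.sum_le_sum fun j _ => ?_
        calc h j * X.transpose.mulVec (X.mulVec h) j
            ≤ |h j * X.transpose.mulVec (X.mulVec h) j| := le_abs_self _
          _ = |h j| * |X.transpose.mulVec (X.mulVec h) j| := abs_mul _ _
          _ ≤ |h j| * b := mul_le_mul_of_nonneg_left (hb j) (abs_nonneg _)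
    _ = l1 h * b := by rw [l1, ← Finset.sum_mul]

lemma det_core {n p : ℕ} (X : Matrix (Fin n) (Fin p) ℝ) {δ cc : ℝ} (hδ : 0 ≤ δ) (hcc : 0 ≤ cc)
    (s : ℕ) (h : Fin p → ℝ)
    (hγ : 0 < gammaX X (Nat.ceil ((2+cc)*(s:ℝ))))
    (hl0 : (l0 h : ℝ) ≤ (2+cc)*(s:ℝ))
    (hXh : ∀ j, |X.transpose.mulVec (X.mulVec h) j| ≤ 2*δ) :
    l1 h ≤ 2*(2+cc)*((gammaX X (Nat.ceil ((2+cc)*(s:ℝ))))^2)⁻¹*(s:ℝ)*δ ∧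
    l2sq h ≤ 4*(2+cc)*((gammaX X (Nat.ceil ((2+cc)*(s:ℝ))))^4)⁻¹*(s:ℝ)*δ^2 ∧
    l2sq (X.mulVec h) ≤ 4*(2+cc)*((gammaX X (Nat.ceil ((2+cc)*(s:ℝ))))^2)⁻¹*(s:ℝ)*δ^2 := by
  set γ := gammaX X (Nat.ceil ((2+cc)*(s:ℝ))) with hγdef
  set K := (2+cc)*(s:ℝ) with hK
  have hK0 : 0 ≤ K := by positivity
  have hceil : l0 h ≤ Nat.ceil K := by
    have h1 : (l0 h : ℝ) ≤ (Nat.ceil K : ℝ) := le_trans hl0 (Nat.le_ceil K)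
    exact_mod_cast h1
  have hg2 : 0 < γ^2 := by positivity
  have hg4 : 0 < γ^4 := by positivity
  have f1 : γ^2 * l2sq h ≤ l2sq (X.mulVec h) := gamma_sq_bound X _ hγ hceil
  have f2 : l2sq (X.mulVec h) ≤ l1 h * (2*δ) := l2sq_mulVec_le X h (2*δ) hXh
  have f3 : (l1 h)^2 ≤ K * l2sq h := by
    calc (l1 h)^2 ≤ (l0 h : ℝ) * l2sq h := l1_sq_le h
      _ ≤ K * l2sq h := mul_le_mul_of_nonneg_right hl0 (l2sq_nonneg h)
  have hL0 : 0 ≤ l1 h := l1_nonneg h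
  have hA0 : 0 ≤ l2sq h := l2sq_nonneg h
  have hB0 : 0 ≤ l2sq (X.mulVec h) := l2sq_nonneg _
  -- key scalar bound : γ² * l1 h ≤ 2 δ K
  have key1 : γ^2 * l1 h ≤ 2*δ*K := by
    rcases eq_or_lt_of_le hL0 with hL | hL
    · rw [← hL, mul_zero]; positivity
    · nlinarith [mul_le_mul_of_nonneg_left f1 (le_of_lt hg2), sq_nonneg (l1 h)]
  have key2 : γ^4 * l2sq h ≤ 4*δ^2*K := by
    rcases eq_or_lt_of_le hA0 with hA | hA
    · rw [← hA, mul_zero]; positivity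
    · nlinarith [sq_nonneg (γ^2 * l2sq h), mul_le_mul_of_nonneg_left f3 (sq_nonneg (2*δ))]
  have key3 : γ^2 * l2sq (X.mulVec h) ≤ 4*δ^2*K := by
    nlinarith [mul_le_mul_of_nonneg_left f2 (le_of_lt hg2)]
  refine ⟨?_, ?_, ?_⟩
  · rw [show 2*(2+cc)*(γ^2)⁻¹*(s:ℝ)*δ = (2*δ*K)/γ^2 by field_simp; ring]
    rw [le_div_iff₀ hg2]
    linarith [key1]
  · rw [show 4*(2+cc)*(γ^4)⁻¹*(s:ℝ)*δ^2 = (4*δ^2*K)/γ^4 by field_simp; ring]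
    rw [le_div_iff₀ hg4]
    linarith [key2]
  · rw [show 4*(2+cc)*(γ^2)⁻¹*(s:ℝ)*δ^2 = (4*δ^2*K)/γ^2 by field_simp; ring]
    rw [le_div_iff₀ hg2]
    linarith [key3]

lemma Zlaw {n : ℕ} (ε : Fin n → Ω → ℝ) (hmeas : ∀ i, Measurable (ε i))
    (hindep : iIndepFun ε P) {σ : ℝ} (hσ : 0 < σ)
    (hgauss : ∀ i, Measure.map (ε i) P = gaussianReal 0 (σ^2).toNNReal)
    (c : Fin n → ℝ) (hc : ∑ i, (c i)^2 = 1) :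
    P.map (fun ω => ∑ i, c i * ε i ω) = gaussianReal 0 (σ^2).toNNReal := by
  set ξ : Fin n → Ω → ℝ := fun i ω => c i * ε i ω with hξ
  have hξm : ∀ i, Measurable (ξ i) := fun i => (hmeas i).const_mul _
  have hξind : iIndepFun ξ P :=
    hindep.comp (fun i x => c i * x) (fun i => measurable_id.const_mul _)
  set v : Fin n → ℝ≥0 := fun i => NNReal.mk ((c i)^2) (sq_nonneg _) * (σ^2).toNNReal with hv
  have hξg : ∀ i, P.map (ξ i) = gaussianReal 0 (v i) := by
    intro i
    have h1 : P.map (ξ i) = (P.map (ε i)).map (fun x => c i * x) :=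
      (Measure.map_map (measurable_id.const_mul _) (hmeas i)).symm
    rw [h1, hgauss i]
    have := gaussianReal_map_const_mul (μ := 0) (v := (σ^2).toNNReal) (c i)
    simpa using this
  have hsum := gauss_sum ξ hξm hξind v hξg Finset.univ
  have hvs : ∑ i, v i = (σ^2).toNNReal := by
    apply NNReal.coe_injective
    simp only [hv, NNReal.coe_sum, NNReal.coe_mul, NNReal.coe_mk,
      Real.coe_toNNReal _ (sq_nonneg σ)]
    rw [← Finset.sum_mul, hc, one_mul]
  rw [hvs] at hsum
  exact hsum

lemma tail_const_bound {p : ℕ} (hp : 2 ≤ p) {σ a : ℝ} (hσ : 0 < σ) (ha : 0 ≤ a)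
    {δ : ℝ} (hδ : δ = σ * Real.sqrt (2*(1+a)*Real.log p)) :
    2 * (σ^2/δ) * (Real.sqrt (2*π*σ^2))⁻¹ * Real.exp (-δ^2/(2*σ^2))
      ≤ (((p:ℝ)^a * Real.sqrt (π * Real.log p))⁻¹) / p := by
  have hp1 : (1:ℝ) < (p:ℝ) := by exact_mod_cast lt_of_lt_of_le one_lt_two hp
  have hp0 : (0:ℝ) < (p:ℝ) := lt_trans zero_lt_one hp1
  set Lg := Real.log p with hLg
  have hLg0 : 0 < Lg := Real.log_pos hp1
  have h1a : (0:ℝ) < 1 + a := by linarith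
  have hsq : (0:ℝ) < 2*(1+a)*Lg := by positivity
  have hδpos : 0 < δ := by rw [hδ]; positivity
  have hδ2 : δ^2 = σ^2 * (2*(1+a)*Lg) := by
    rw [hδ, mul_pow, Real.sq_sqrt hsq.le]
  have hexp : Real.exp (-δ^2/(2*σ^2)) = (p:ℝ)^(-(1+a)) := by
    rw [hδ2, Real.rpow_def_of_pos hp0]
    congr 1
    field_simp
    ring
  have hsqrtprod : Real.sqrt (2*(1+a)*Lg) * Real.sqrt (2*π) = 2 * Real.sqrt (π*(1+a)*Lg) := by
    rw [← Real.sqrt_mul hsq.le, show (2*(1+a)*Lg)*(2*π) = 2^2 * (π*(1+a)*Lg) by ring,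
      Real.sqrt_mul (by norm_num : (0:ℝ) ≤ (2:ℝ)^2), Real.sqrt_sq (by norm_num : (0:ℝ) ≤ 2)]
  have hsplit : Real.sqrt (2*π*σ^2) = Real.sqrt (2*π) * σ := by
    rw [show 2*π*σ^2 = (2*π)*σ^2 by ring, Real.sqrt_mul (by positivity), Real.sqrt_sq hσ.le]
  have hcoef : 2 * (σ^2/δ) * (Real.sqrt (2*π*σ^2))⁻¹ = (Real.sqrt (π*(1+a)*Lg))⁻¹ := by
    rw [hsplit, hδ]
    have h2π : (0:ℝ) < Real.sqrt (2*π) := Real.sqrt_pos.mpr (by positivity)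
    have hs1 : (0:ℝ) < Real.sqrt (2*(1+a)*Lg) := Real.sqrt_pos.mpr hsq
    have hs2 : (0:ℝ) < Real.sqrt (π*(1+a)*Lg) := Real.sqrt_pos.mpr (by positivity)
    have h22 : Real.sqrt 2 ^ 2 = 2 := Real.sq_sqrt (by norm_num)
    field_simp
    have e : Real.sqrt ((1+a)*Lg*π) = Real.sqrt (π*(1+a)*Lg) := by congr 1; ring
    linear_combination -hsqrtprod + 2*e
  have hmono : (Real.sqrt (π*(1+a)*Lg))⁻¹ ≤ (Real.sqrt (π*Lg))⁻¹ := by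
    have h1 : Real.sqrt (π*Lg) ≤ Real.sqrt (π*(1+a)*Lg) := by
      refine Real.sqrt_le_sqrt ?_
      nlinarith [mul_nonneg (mul_nonneg Real.pi_pos.le ha) hLg0.le]
    have h2 : (0:ℝ) < Real.sqrt (π*Lg) := Real.sqrt_pos.mpr (by positivity)
    exact inv_anti₀ h2 h1
  have hrpow : (0:ℝ) ≤ (p:ℝ)^(-(1+a)) := Real.rpow_nonneg hp0.le _
  calc 2 * (σ^2/δ) * (Real.sqrt (2*π*σ^2))⁻¹ * Real.exp (-δ^2/(2*σ^2))
      = (Real.sqrt (π*(1+a)*Lg))⁻¹ * (p:ℝ)^(-(1+a)) := by rw [hcoef, hexp]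
    _ ≤ (Real.sqrt (π*Lg))⁻¹ * (p:ℝ)^(-(1+a)) :=
        mul_le_mul_of_nonneg_right hmono hrpow
    _ = (((p:ℝ)^a * Real.sqrt (π * Lg))⁻¹) / p := by
        rw [show -(1+a) = -1 + -a by ring, Real.rpow_add hp0, Real.rpow_neg_one,
          Real.rpow_neg hp0.le, mul_inv]
        field_simp

end Aux

section Main
open Real Set Filter
open scoped NNReal ENNReal

/-- Error bounds for a feasible (not necessarily optimal) solution whose
ℓ₀-norm is within a multiplicative factor `1 + c` of the lower bound `ŝ_LB` on the
optimal value.  Here `γ` is evaluated at `⌈(2+c)s*⌉`. -/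
theorem stmt8 {Ω : Type*} [MeasurableSpace Ω] (P : Measure Ω) [IsProbabilityMeasure P]
    {n p : ℕ} (hp : 2 ≤ p) (X : Matrix (Fin n) (Fin p) ℝ)
    (hcols : ∀ j, ∑ i, (X i j) ^ 2 = 1)
    (βstar : Fin p → ℝ) (s : ℕ) (hs : s = l0 βstar)
    (σ : ℝ) (hσ : 0 < σ)
    (ε : Fin n → Ω → ℝ) (hmeas : ∀ i, Measurable (ε i))
    (hindep : iIndepFun ε P)
    (hgauss : ∀ i, Measure.map (ε i) P = gaussianReal 0 (σ ^ 2).toNNReal)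
    (y : Ω → Fin n → ℝ) (hy : ∀ ω i, y ω i = X.mulVec βstar i + ε i ω)
    (a : ℝ) (ha : 0 ≤ a)
    (δ : ℝ) (hδ : δ = σ * Real.sqrt (2 * (1 + a) * Real.log p))
    (cc : ℝ) (hcc : 0 ≤ cc)
    (hγ : 0 < gammaX X (Nat.ceil ((2 + cc) * (s : ℝ))))
    (βhat : Ω → Fin p → ℝ) (sLB : Ω → ℕ)
    (hLB : ∀ ω, ∀ β : Fin p → ℝ, Feas X (y ω) δ β → sLB ω ≤ l0 β)
    (hfeas : ∀ ω, Feas X (y ω) δ (βhat ω))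
    (hnearopt : ∀ ω, (l0 (βhat ω) : ℝ) ≤ (1 + cc) * (sLB ω : ℝ)) :
    ENNReal.ofReal (1 - ((p : ℝ) ^ a * Real.sqrt (Real.pi * Real.log p))⁻¹) ≤
      P {ω |
        (l0 (βhat ω) : ℝ) ≤ (1 + cc) * (s : ℝ) ∧
        l1 (βhat ω - βstar) ≤
          2 * (2 + cc) * ((gammaX X (Nat.ceil ((2 + cc) * (s : ℝ)))) ^ 2)⁻¹ * s * δ ∧
        l2sq (βhat ω - βstar) ≤
          4 * (2 + cc) * ((gammaX X (Nat.ceil ((2 + cc) * (s : ℝ)))) ^ 4)⁻¹ * s * δ ^ 2 ∧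
        (n : ℝ)⁻¹ * l2sq (X.mulVec (βhat ω - βstar)) ≤
          4 * (2 + cc) * ((gammaX X (Nat.ceil ((2 + cc) * (s : ℝ)))) ^ 2)⁻¹ * s * δ ^ 2} := by
  have hp1 : (1:ℝ) < (p:ℝ) := by exact_mod_cast lt_of_lt_of_le one_lt_two hp
  have hp0 : (0:ℝ) < (p:ℝ) := lt_trans zero_lt_one hp1
  have hLg0 : 0 < Real.log p := Real.log_pos hp1
  have hδpos : 0 < δ := by
    rw [hδ]
    have h1a : (0:ℝ) < 1 + a := by linarith
    positivity
  set V : ℝ≥0 := (σ^2).toNNReal with hV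
  have hVcoe : (V:ℝ) = σ^2 := Real.coe_toNNReal _ (sq_nonneg σ)
  have hVne : V ≠ 0 := by
    intro h
    have : (V:ℝ) = 0 := by rw [h]; simp
    rw [hVcoe] at this
    nlinarith
  set Z : Fin p → Ω → ℝ := fun j ω => ∑ i, X i j * ε i ω with hZ
  have hZmeas : ∀ j, Measurable (Z j) := fun j =>
    Finset.measurable_sum Finset.univ fun i _ => (hmeas i).const_mul _
  have hZlaw : ∀ j, P.map (Z j) = gaussianReal 0 V :=
    fun j => Zlaw ε hmeas hindep hσ hgauss (fun i => X i j) (hcols j)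
  set q : ℝ := ((p : ℝ) ^ a * Real.sqrt (Real.pi * Real.log p))⁻¹ with hq
  have hq0 : 0 ≤ q :=
    inv_nonneg.mpr (mul_nonneg (Real.rpow_nonneg hp0.le _) (Real.sqrt_nonneg _))
  have hsetm : MeasurableSet {x : ℝ | δ < |x|} :=
    measurableSet_lt measurable_const continuous_abs.measurable
  have hTail : ∀ j, P {ω | δ < |Z j ω|} ≤ ENNReal.ofReal (q / (p:ℝ)) := by
    intro j
    have h1 : P {ω | δ < |Z j ω|} = (P.map (Z j)) {x : ℝ | δ < |x|} := by
      rw [Measure.map_apply (hZmeas j) hsetm]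
      rfl
    rw [h1, hZlaw j]
    refine le_trans (gauss_measure_tail V hVne δ hδpos) ?_
    refine ENNReal.ofReal_le_ofReal ?_
    rw [show (2 * ((V:ℝ)/δ) * (Real.sqrt (2*π*(V:ℝ)))⁻¹ * Real.exp (-δ^2/(2*(V:ℝ))))
        = 2 * (σ^2/δ) * (Real.sqrt (2*π*σ^2))⁻¹ * Real.exp (-δ^2/(2*σ^2)) by rw [hVcoe]]
    exact tail_const_bound hp hσ ha hδ
  set E : Set Ω := {ω | ∀ j, |Z j ω| ≤ δ} with hE
  have hEm : MeasurableSet E := by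
    have : E = ⋂ j, {ω | |Z j ω| ≤ δ} := by
      ext ω; simp [hE, Set.mem_iInter]
    rw [this]
    exact MeasurableSet.iInter fun j =>
      measurableSet_le (hZmeas j).abs measurable_const
  have hEc : P Eᶜ ≤ ENNReal.ofReal q := by
    have hEc_eq : Eᶜ = ⋃ j, {ω | δ < |Z j ω|} := by
      ext ω
      simp [hE, not_forall, not_le]
    rw [hEc_eq]
    calc P (⋃ j, {ω | δ < |Z j ω|}) ≤ ∑' j, P {ω | δ < |Z j ω|} := measure_iUnion_le _
      _ = ∑ j, P {ω | δ < |Z j ω|} := tsum_fintype _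
      _ ≤ ∑ _j : Fin p, ENNReal.ofReal (q / (p:ℝ)) := Finset.sum_le_sum fun j _ => hTail j
      _ = (p : ℝ≥0∞) * ENNReal.ofReal (q / (p:ℝ)) := by
          rw [Finset.sum_const, Finset.card_univ, Fintype.card_fin, nsmul_eq_mul]
      _ = ENNReal.ofReal q := by
          rw [← ENNReal.ofReal_natCast p, ← ENNReal.ofReal_mul (Nat.cast_nonneg p)]
          congr 1
          field_simp
  have hPE : ENNReal.ofReal (1 - q) ≤ P E := by
    have h1 : P E = 1 - P Eᶜ := by
      have h2 := prob_compl_eq_one_sub (μ := P) hEm.compl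
      rwa [compl_compl] at h2
    rw [h1, show ENNReal.ofReal (1 - q) = 1 - ENNReal.ofReal q by
      rw [ENNReal.ofReal_sub _ hq0, ENNReal.ofReal_one]]
    exact tsub_le_tsub_left hEc 1
  refine le_trans hPE (measure_mono ?_)
  intro ω hω
  simp only [hE, Set.mem_setOf_eq] at hω
  have hyz : ∀ j, X.transpose.mulVec (y ω - X.mulVec βstar) j = Z j ω := by
    intro j
    have hfun : (y ω - X.mulVec βstar) = fun i => ε i ω := by
      funext i
      rw [Pi.sub_apply, hy ω i]
      ring
    rw [hfun]
    simp [Matrix.mulVec, dotProduct, Matrix.transpose_apply, hZ]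
  have hfeasstar : Feas X (y ω) δ βstar := fun j => by rw [hyz j]; exact hω j
  have hsLB : (sLB ω : ℝ) ≤ (s:ℝ) := by
    have h1 : sLB ω ≤ l0 βstar := hLB ω βstar hfeasstar
    rw [hs]
    exact_mod_cast h1
  have c1 : (l0 (βhat ω) : ℝ) ≤ (1+cc) * (s:ℝ) :=
    le_trans (hnearopt ω) (mul_le_mul_of_nonneg_left hsLB (by linarith))
  have hl0h : (l0 (βhat ω - βstar) : ℝ) ≤ (2+cc)*(s:ℝ) := by
    have h1 := l0_sub_le (βhat ω) βstar
    have h2 : (l0 (βhat ω - βstar):ℝ) ≤ (l0 (βhat ω):ℝ) + (l0 βstar:ℝ) := by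
      exact_mod_cast h1
    rw [← hs] at h2
    have hs0 : (0:ℝ) ≤ (s:ℝ) := Nat.cast_nonneg s
    linarith
  have hXh : ∀ j, |X.transpose.mulVec (X.mulVec (βhat ω - βstar)) j| ≤ 2*δ := by
    intro j
    have hid : X.mulVec (βhat ω - βstar)
        = (y ω - X.mulVec βstar) - (y ω - X.mulVec (βhat ω)) := by
      funext i
      simp only [Matrix.mulVec_sub, Pi.sub_apply]
      ring
    have h2 : X.transpose.mulVec (X.mulVec (βhat ω - βstar)) j
        = X.transpose.mulVec (y ω - X.mulVec βstar) j
          - X.transpose.mulVec (y ω - X.mulVec (βhat ω)) j := by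
      rw [hid, Matrix.mulVec_sub]
      rfl
    rw [h2]
    have hA : |X.transpose.mulVec (y ω - X.mulVec βstar) j| ≤ δ := by
      rw [hyz j]; exact hω j
    have hB : |X.transpose.mulVec (y ω - X.mulVec (βhat ω)) j| ≤ δ := hfeas ω j
    calc |X.transpose.mulVec (y ω - X.mulVec βstar) j
          - X.transpose.mulVec (y ω - X.mulVec (βhat ω)) j|
        ≤ |X.transpose.mulVec (y ω - X.mulVec βstar) j|
          + |X.transpose.mulVec (y ω - X.mulVec (βhat ω)) j| := abs_sub _ _
      _ ≤ 2*δ := by linarith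
  have hdet := det_core X hδpos.le hcc s (βhat ω - βstar) hγ hl0h hXh
  refine ⟨c1, hdet.1, hdet.2.1, ?_⟩
  have hB := hdet.2.2
  have hRHS : (0:ℝ) ≤ 4*(2+cc)*((gammaX X (Nat.ceil ((2 + cc) * (s : ℝ))))^2)⁻¹*(s:ℝ)*δ^2 := by
    positivity
  rcases Nat.eq_zero_or_pos n with hn | hn
  · subst hn
    simpa using hRHS
  · have hn1 : (1:ℝ) ≤ (n:ℝ) := by exact_mod_cast hn
    calc (n:ℝ)⁻¹ * l2sq (X.mulVec (βhat ω - βstar))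
        ≤ 1 * l2sq (X.mulVec (βhat ω - βstar)) :=
          mul_le_mul_of_nonneg_right (inv_le_one_of_one_le₀ hn1) (l2sq_nonneg _)
      _ = l2sq (X.mulVec (βhat ω - βstar)) := one_mul _
      _ ≤ _ := hB

end Main
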